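/- Let F be a d-dimensional cellular automaton on a finite nonempty alphabet A, and let F↑ be its canonical lift to dimension d+1, the map on A^{ℤ^{d+1}} (identifying ℤ^{d+1} with ℤ^d × ℤ) defined by F↑(x)(z,k) = F(x(·,k))(z), i.e., F applied separately to each slice x(·,k) : ℤ^d → A. Then F is sensitive to initial conditions if and only if F↑ is sensitive to initial conditions. -/

import Mathlib

open Function

/-- Configuration space: `d`-dimensional configurations over alphabet `A`. -/
abbrev Config (d : ℕ) (A : Type*) := (Fin d → ℤ) → A

/-- Sup norm of a lattice point. -/
def normInf {d : ℕ} (i : Fin d → ℤ) : ℕ := Finset.univ.sup fun k => (i k).natAbs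

open Classical in
noncomputable def distC {d : ℕ} {A : Type*} (x y : Config d A) : ℝ :=
  if x = y then 0
  else (2 : ℝ) ^ (-((sInf {n : ℕ | ∃ i, normInf i = n ∧ x i ≠ y i} : ℕ) : ℤ))

/-- The shift by `v`. -/
def shiftCA {d : ℕ} {A : Type*} (v : Fin d → ℤ) (x : Config d A) : Config d A :=
  fun z => x (z + v)

/-- `F` is a cellular automaton: continuous (w.r.t. the Cantor metric) and shift-commuting. -/
def IsCA {d : ℕ} {A : Type*} (F : Config d A → Config d A) : Prop :=
  (∀ x : Config d A, ∀ ε > (0:ℝ), ∃ δ > (0:ℝ), ∀ y, distC x y < δ → distC (F x) (F y) < ε) ∧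
  (∀ (v : Fin d → ℤ) (x : Config d A), F (shiftCA v x) = shiftCA v (F x))

/-- `x` is an equicontinuous point of `F`. -/
def IsEquiPoint {d : ℕ} {A : Type*} (F : Config d A → Config d A) (x : Config d A) : Prop :=
  ∀ ε > (0:ℝ), ∃ δ > (0:ℝ), ∀ y, distC x y < δ → ∀ t : ℕ, distC (F^[t] x) (F^[t] y) < ε

/-- `F` is sensitive to initial conditions. -/
def Sensitive {d : ℕ} {A : Type*} (F : Config d A → Config d A) : Prop :=
  ∃ ε > (0:ℝ), ∀ x : Config d A, ∀ δ > (0:ℝ),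
    ∃ y, ∃ t : ℕ, distC x y < δ ∧ distC (F^[t] x) (F^[t] y) > ε

/-- `ε` is a sensitivity constant for `F`. -/
def IsSensConst {d : ℕ} {A : Type*} (F : Config d A → Config d A) (ε : ℝ) : Prop :=
  ∀ x : Config d A, ∀ δ > (0:ℝ),
    ∃ y, ∃ t : ℕ, distC x y < δ ∧ distC (F^[t] x) (F^[t] y) ≥ ε

/-- Canonical lift of a `d`-dimensional CA to dimension `d+1`:
`F` is applied separately to each slice (last coordinate fixed). -/
def liftCA {d : ℕ} {A : Type*} (F : Config d A → Config d A) :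
    Config (d+1) A → Config (d+1) A :=
  fun x z => F (fun w => x (Fin.snoc w (z (Fin.last d)))) (fun k => z k.castSucc)

/-- The tile set `(T,H,V)` tiles the plane. -/
def TilesPlane {T : Type*} (H V : Set (T × T)) : Prop :=
  ∃ c : ℤ × ℤ → T, ∀ z : ℤ × ℤ, (c z, c (z + (1,0))) ∈ H ∧ (c z, c (z + (0,1))) ∈ V

/-- The tile set `(T,H,V)` admits a valid tiling of the `m × m` square. -/
def TilesSquare {T : Type*} (H V : Set (T × T)) (m : ℕ) : Prop :=
  ∃ c : ℕ → ℕ → T,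
    (∀ i j, i + 1 < m → j < m → (c i j, c (i+1) j) ∈ H) ∧
    (∀ i j, i < m → j + 1 < m → (c i j, c i (j+1)) ∈ V)

/-- Local rules of `d`-dimensional CA with `n+1` states and radius `r`. -/
abbrev LocalRule (d n r : ℕ) := ((Fin d → Fin (2*r+1)) → Fin (n+1)) → Fin (n+1)

/-- Codes of `d`-dimensional cellular automata: number of states, radius, local rule. -/
abbrev CACode (d : ℕ) := Σ n : ℕ, Σ r : ℕ, LocalRule d n r

/-- An upper bound for the number of local rules. -/
abbrev ruleBound (d n r : ℕ) : ℕ := (n+1) ^ ((n+1) ^ ((2*r+1) ^ d))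

/-- Local rules are in bijection with `Fin (ruleBound d n r)`. -/
def ruleEquiv (d n r : ℕ) : LocalRule d n r ≃ Fin (ruleBound d n r) :=
  (Equiv.arrowCongr
      ((Equiv.arrowCongr finFunctionFinEquiv (Equiv.refl (Fin (n+1)))).trans finFunctionFinEquiv)
      (Equiv.refl (Fin (n+1)))).trans finFunctionFinEquiv

theorem primrec_ruleBound (d : ℕ) :
    Primrec fun t : ℕ × ℕ × ℕ => ruleBound d t.1 t.2.1 := by
  have hpow : Primrec₂ (fun a b : ℕ => a ^ b) := Primrec₂.unpaired'.mp Nat.Primrec.pow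
  have h1 : Primrec fun t : ℕ × ℕ × ℕ => t.1 + 1 := Primrec.succ.comp Primrec.fst
  have h2 : Primrec fun t : ℕ × ℕ × ℕ => (2 * t.2.1 + 1) ^ d :=
    hpow.comp (Primrec.succ.comp
      (Primrec.nat_mul.comp (Primrec.const 2) (Primrec.fst.comp Primrec.snd)))
      (Primrec.const d)
  have h3 : Primrec fun t : ℕ × ℕ × ℕ => (t.1 + 1) ^ ((2 * t.2.1 + 1) ^ d) := hpow.comp h1 h2
  exact hpow.comp h1 h3

theorem primrec_valid (d : ℕ) :
    PrimrecPred fun t : ℕ × ℕ × ℕ => t.2.2 < ruleBound d t.1 t.2.1 :=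
  Primrec.nat_lt.comp (Primrec.snd.comp Primrec.snd) (primrec_ruleBound d)

instance validCodePrimcodable (d : ℕ) :
    Primcodable {t : ℕ × ℕ × ℕ // t.2.2 < ruleBound d t.1 t.2.1} :=
  Primcodable.subtype (primrec_valid d)

/-- CA codes, encoded as triples of natural numbers. -/
def codeEquiv (d : ℕ) : CACode d ≃ {t : ℕ × ℕ × ℕ // t.2.2 < ruleBound d t.1 t.2.1} where
  toFun c := ⟨(c.1, c.2.1, (ruleEquiv d c.1 c.2.1 c.2.2).val), (ruleEquiv d c.1 c.2.1 c.2.2).isLt⟩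
  invFun t := ⟨t.1.1, t.1.2.1, (ruleEquiv d t.1.1 t.1.2.1).symm ⟨t.1.2.2, t.2⟩⟩
  left_inv c := by rcases c with ⟨n, r, f⟩; simp
  right_inv t := by rcases t with ⟨⟨n, r, k⟩, h⟩; simp

instance CACodePrimcodable (d : ℕ) : Primcodable (CACode d) :=
  Primcodable.ofEquiv _ (codeEquiv d)

/-- The global CA induced by a code. -/
def codeCA (d : ℕ) (c : CACode d) :
    Config d (Fin (c.1 + 1)) → Config d (Fin (c.1 + 1)) :=
  fun x z => c.2.2 (fun u => x (fun k => z k + ((u k : ℕ) : ℤ) - ((c.2.1 : ℕ) : ℤ)))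



namespace LiftSens

noncomputable def D {d : ℕ} {A : Type*} (x y : Config d A) : ℕ :=
  sInf {n : ℕ | ∃ i, normInf i = n ∧ x i ≠ y i}

variable {d : ℕ} {A : Type*}

lemma distC_eq {x y : Config d A} (h : x ≠ y) : distC x y = (2:ℝ) ^ (-(D x y : ℤ)) := if_neg h

lemma distC_self (x : Config d A) : distC x x = 0 := if_pos rfl

lemma D_spec {x y : Config d A} (h : x ≠ y) : ∃ i, normInf i = D x y ∧ x i ≠ y i := by
  obtain ⟨i, hi⟩ := Function.ne_iff.mp h
  exact Nat.sInf_mem (s := {n : ℕ | ∃ i, normInf i = n ∧ x i ≠ y i}) ⟨normInf i, i, rfl, hi⟩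

lemma D_le {x y : Config d A} {i} (h : x i ≠ y i) : D x y ≤ normInf i := Nat.sInf_le ⟨i, rfl, h⟩

lemma pow_le_pow {m n : ℕ} (h : n ≤ m) : (2:ℝ)^(-(m:ℤ)) ≤ (2:ℝ)^(-(n:ℤ)) := by
  apply zpow_le_zpow_right₀ one_le_two
  omega

lemma lt_of_pow_lt {m n : ℕ} (h : (2:ℝ)^(-(m:ℤ)) < (2:ℝ)^(-(n:ℤ))) : n < m := by
  by_contra hc
  exact absurd (pow_le_pow (by omega)) (not_le.mpr h)

lemma distC_ge {x y : Config d A} {i} (h : x i ≠ y i) :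
    (2:ℝ)^(-(normInf i : ℤ)) ≤ distC x y := by
  rw [distC_eq (fun he => h (by rw [he]))]
  exact pow_le_pow (D_le h)

lemma ne_of_distC_pos {x y : Config d A} {ε : ℝ} (hε : 0 < ε) (h : distC x y > ε) : x ≠ y := by
  intro he; rw [he, distC_self] at h; linarith

lemma normInf_snoc_le (i : Fin d → ℤ) (k : ℤ) :
    normInf (Fin.snoc i k) ≤ max (normInf i) k.natAbs := by
  apply Finset.sup_le
  intro j _
  induction j using Fin.lastCases with
  | last => simp [Fin.snoc_last]
  | cast j =>
    simp only [Fin.snoc_castSucc]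
    exact le_max_of_le_left (Finset.le_sup (f := fun k => (i k).natAbs) (Finset.mem_univ j))

lemma normInf_init_le (z : Fin (d+1) → ℤ) : normInf (Fin.init z) ≤ normInf z := by
  apply Finset.sup_le
  intro j _
  exact Finset.le_sup (f := fun k => (z k).natAbs) (Finset.mem_univ j.castSucc)

lemma natAbs_last_le (z : Fin (d+1) → ℤ) : (z (Fin.last d)).natAbs ≤ normInf z :=
  Finset.le_sup (f := fun k => (z k).natAbs) (Finset.mem_univ (Fin.last d))

lemma lift_iter (F : Config d A → Config d A) (t : ℕ)
    (x : Config (d+1) A) (z : Fin (d+1) → ℤ) :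
    (liftCA F)^[t] x z
      = F^[t] (fun w => x (Fin.snoc w (z (Fin.last d)))) (fun k => z k.castSucc) := by
  induction t generalizing x with
  | zero =>
    simp only [iterate_zero, id_eq]
    conv_lhs => rw [← Fin.snoc_init_self z]
    rfl
  | succ t ih =>
    rw [Function.iterate_succ_apply, ih, Function.iterate_succ_apply]
    have : (fun w => liftCA F x (Fin.snoc w (z (Fin.last d))))
        = F (fun w => x (Fin.snoc w (z (Fin.last d)))) := by
      funext w
      simp [liftCA, Fin.snoc_castSucc, Fin.snoc_last]
    rw [this]

end LiftSens

open LiftSens in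

/-- a `d`-dimensional CA is sensitive to initial conditions iff its
canonical lift to dimension `d+1` is sensitive to initial conditions. -/
theorem lift_sensitive_iff
    {d : ℕ} (hd : 1 ≤ d) (A : Type) [Fintype A] [Nonempty A]
    (F : Config d A → Config d A) (hF : IsCA F) :
    Sensitive F ↔ Sensitive (liftCA F) := by
  classical
  constructor
  · rintro ⟨ε, hε, hsens⟩
    refine ⟨ε, hε, fun x δ hδ => ?_⟩
    obtain ⟨y₀, t, hclose, hfar⟩ := hsens (fun w => x (Fin.snoc w (0:ℤ))) δ hδ
    set x₀ : Config d A := fun w => x (Fin.snoc w (0:ℤ)) with hx₀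
    set y : Config (d+1) A :=
      fun z => if z (Fin.last d) = 0 then y₀ (Fin.init z) else x z with hy
    have hyz : ∀ z, z (Fin.last d) = 0 → y z = y₀ (Fin.init z) := fun z hz => by simp [hy, hz]
    have hyz' : ∀ z, z (Fin.last d) ≠ 0 → y z = x z := fun z hz => by simp [hy, hz]
    have hxz : ∀ z : Fin (d+1) → ℤ, z (Fin.last d) = 0 → x z = x₀ (Fin.init z) := by
      intro z hz
      have h : x₀ (Fin.init z) = x (Fin.snoc (Fin.init z) (0:ℤ)) := rfl
      rw [h, ← hz, Fin.snoc_init_self]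
    have hslice : (fun w => y (Fin.snoc w (0:ℤ))) = y₀ := by
      funext w
      rw [hyz _ (by simp), Fin.init_snoc]
    refine ⟨y, t, ?_, ?_⟩
    · by_cases hxy : x = y
      · rw [hxy, distC_self]; exact hδ
      · have hx0 : x₀ ≠ y₀ := by
          intro he
          apply hxy
          funext z
          by_cases hz : z (Fin.last d) = 0
          · rw [hxz z hz, hyz z hz, he]
          · rw [hyz' z hz]
        have hD : D x₀ y₀ ≤ D x y := by
          obtain ⟨z, hz, hne⟩ := D_spec hxy
          have hz0 : z (Fin.last d) = 0 := by
            by_contra h0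
            exact hne (hyz' z h0).symm
          have hni : x₀ (Fin.init z) ≠ y₀ (Fin.init z) := by
            rw [← hxz z hz0, ← hyz z hz0]; exact hne
          exact le_trans (D_le hni) (hz ▸ normInf_init_le z)
        calc distC x y = (2:ℝ)^(-(D x y : ℤ)) := distC_eq hxy
          _ ≤ (2:ℝ)^(-(D x₀ y₀ : ℤ)) := pow_le_pow hD
          _ = distC x₀ y₀ := (distC_eq hx0).symm
          _ < δ := hclose
    · have himgne : F^[t] x₀ ≠ F^[t] y₀ := ne_of_distC_pos hε hfar
      obtain ⟨i, hi, hne⟩ := D_spec himgne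
      have h1 : (liftCA F)^[t] x (Fin.snoc i (0:ℤ)) = F^[t] x₀ i := by
        rw [lift_iter]
        simp only [Fin.snoc_last, Fin.snoc_castSucc]
        rfl
      have h2 : (liftCA F)^[t] y (Fin.snoc i (0:ℤ)) = F^[t] y₀ i := by
        rw [lift_iter]
        simp only [Fin.snoc_last, Fin.snoc_castSucc]
        rw [hslice]
      have hne' : (liftCA F)^[t] x (Fin.snoc i (0:ℤ)) ≠ (liftCA F)^[t] y (Fin.snoc i (0:ℤ)) := by
        rw [h1, h2]; exact hne
      have hb : normInf (Fin.snoc i (0:ℤ)) ≤ D (F^[t] x₀) (F^[t] y₀) := by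
        have h4 := normInf_snoc_le i (0:ℤ)
        simp only [Int.natAbs_zero, Nat.max_eq_left (Nat.zero_le _)] at h4
        omega
      calc ε < distC (F^[t] x₀) (F^[t] y₀) := hfar
        _ = (2:ℝ)^(-(D (F^[t] x₀) (F^[t] y₀) : ℤ)) := distC_eq himgne
        _ ≤ (2:ℝ)^(-(normInf (Fin.snoc i (0:ℤ)) : ℤ)) := pow_le_pow hb
        _ ≤ distC ((liftCA F)^[t] x) ((liftCA F)^[t] y) := distC_ge hne'
  · rintro ⟨ε, hε, hsens⟩
    obtain ⟨N, hN⟩ : ∃ N : ℕ, (2:ℝ)^(-(N:ℤ)) < ε := by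
      obtain ⟨N, hN⟩ := exists_pow_lt_of_lt_one hε (by norm_num : (1/2:ℝ) < 1)
      refine ⟨N, ?_⟩
      rw [zpow_neg, zpow_natCast]
      calc ((2:ℝ)^N)⁻¹ = (1/2:ℝ)^N := by rw [one_div, inv_pow]
        _ < ε := hN
    refine ⟨ε, hε, fun x δ hδ => ?_⟩
    have hδ' : (0:ℝ) < min δ ((2:ℝ)^(-(N:ℤ))) := lt_min hδ (by positivity)
    obtain ⟨yb, t, hclose, hfar⟩ := hsens (fun z => x (Fin.init z)) (min δ ((2:ℝ)^(-(N:ℤ)))) hδ'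
    set xb : Config (d+1) A := fun z => x (Fin.init z) with hxb
    have himgne : (liftCA F)^[t] xb ≠ (liftCA F)^[t] yb := ne_of_distC_pos hε hfar
    obtain ⟨z, hz, hne⟩ := D_spec himgne
    set n := D ((liftCA F)^[t] xb) ((liftCA F)^[t] yb) with hn
    have hεn : ε < (2:ℝ)^(-(n:ℤ)) := by rw [← distC_eq himgne]; exact hfar
    have hnN : n < N := lt_of_pow_lt (lt_trans hN hεn)
    set k := z (Fin.last d) with hk
    have hsx : (fun w => xb (Fin.snoc w k)) = x := by
      funext w; simp [hxb, Fin.init_snoc]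
    set y : Config d A := fun w => yb (Fin.snoc w k) with hy
    have h1 : (liftCA F)^[t] xb z = F^[t] x (fun j => z j.castSucc) := by
      rw [lift_iter, ← hk, hsx]
    have h2 : (liftCA F)^[t] yb z = F^[t] y (fun j => z j.castSucc) := by
      rw [lift_iter, ← hk, ← hy]
    refine ⟨y, t, ?_, ?_⟩
    · by_cases hxy : x = y
      · rw [hxy, distC_self]; exact hδ
      · have hxbyb : xb ≠ yb := fun he => himgne (by rw [he])
        set m := D xb yb with hm
        have hmδ : (2:ℝ)^(-(m:ℤ)) < min δ ((2:ℝ)^(-(N:ℤ))) := by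
          rw [← distC_eq hxbyb]; exact hclose
        have hNm : N < m := lt_of_pow_lt (lt_of_lt_of_le hmδ (min_le_right _ _))
        have hkn : k.natAbs ≤ n := by rw [hk, ← hz]; exact natAbs_last_le z
        have hDm : m ≤ D x y := by
          obtain ⟨w, hw, hwne⟩ := D_spec hxy
          have hne2 : xb (Fin.snoc w k) ≠ yb (Fin.snoc w k) := by
            simpa [hxb, hy, Fin.init_snoc] using hwne
          have h3 : m ≤ normInf (Fin.snoc w k) := D_le hne2
          have h4 := normInf_snoc_le w k
          rw [← hw]
          omega
        calc distC x y = (2:ℝ)^(-(D x y:ℤ)) := distC_eq hxy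
          _ ≤ (2:ℝ)^(-(m:ℤ)) := pow_le_pow hDm
          _ < min δ ((2:ℝ)^(-(N:ℤ))) := hmδ
          _ ≤ δ := min_le_left _ _
    · have hne' : F^[t] x (fun j => z j.castSucc) ≠ F^[t] y (fun j => z j.castSucc) := by
        rw [← h1, ← h2]; exact hne
      have hni : normInf (fun j : Fin d => z j.castSucc) ≤ n := by
        rw [← hz]; exact normInf_init_le z
      calc ε < (2:ℝ)^(-(n:ℤ)) := hεn
        _ ≤ (2:ℝ)^(-(normInf (fun j : Fin d => z j.castSucc) : ℤ)) := pow_le_pow hni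
        _ ≤ distC (F^[t] x) (F^[t] y) := distC_ge hne'
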